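/- For every integer n ≥ 2 there exists a constant C > 0 such that for all δ ∈ (0, 1/2): ∫_{[0,1]^n} Π_{i=1}^{n} 1/(x_i + x_{i+1} + δ) dx_1 ⋯ dx_n ≤ C·|log δ|, where indices are taken cyclically, i.e. x_{n+1} := x_1. -/

import Mathlib

open MeasureTheory Set ENNReal

noncomputable def Hh (δ t : ℝ) : ℝ≥0∞ := ENNReal.ofReal ((Real.sqrt (t + δ))⁻¹)
noncomputable def Kk (δ a b : ℝ) : ℝ≥0∞ := ENNReal.ofReal ((a + b + δ)⁻¹)
noncomputable def Xx (t : ℝ) : ℝ≥0∞ := Set.indicator (Set.Icc 0 1) 1 t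

lemma measurable_Xx : Measurable Xx := Measurable.indicator measurable_const measurableSet_Icc

lemma measurable_Hh (δ : ℝ) : Measurable (Hh δ) := by
  unfold Hh
  exact ENNReal.measurable_ofReal.comp
    ((Real.continuous_sqrt.measurable.comp (measurable_id.add_const δ)).inv)

lemma Xx_mul (f : ℝ → ℝ≥0∞) (t : ℝ) : Xx t * f t = (Set.Icc (0:ℝ) 1).indicator f t := by
  unfold Xx; by_cases h : t ∈ Set.Icc (0:ℝ) 1 <;> simp [h]

-- ∫_0^c (√(t+δ))⁻¹ dt = 2√(c+δ) - 2√δ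
lemma int1 {δ : ℝ} (hδ : 0 < δ) {c : ℝ} (hc : 0 < c) :
    ∫⁻ t in Set.Icc (0:ℝ) c, ENNReal.ofReal ((Real.sqrt (t + δ))⁻¹)
      = ENNReal.ofReal (2 * Real.sqrt (c + δ) - 2 * Real.sqrt δ) := by
  have hcont : ContinuousOn (fun t : ℝ => (Real.sqrt (t + δ))⁻¹) (Set.Icc 0 c) := by
    apply ContinuousOn.inv₀
    · exact (Real.continuous_sqrt.comp (continuous_id.add continuous_const)).continuousOn
    · intro t ht
      have : 0 < t + δ := by have := ht.1; linarith
      positivity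
  have hint : IntegrableOn (fun t : ℝ => (Real.sqrt (t + δ))⁻¹) (Set.Icc 0 c) :=
    hcont.integrableOn_Icc
  rw [← ofReal_integral_eq_lintegral_ofReal hint]
  · congr 1
    rw [MeasureTheory.integral_Icc_eq_integral_Ioc, ← intervalIntegral.integral_of_le hc.le]
    have : ∫ t in (0:ℝ)..c, (Real.sqrt (t + δ))⁻¹ = 2 * Real.sqrt (c + δ) - 2 * Real.sqrt δ := by
      have hd : ∀ t ∈ Set.uIcc (0:ℝ) c, HasDerivAt (fun u : ℝ => 2 * Real.sqrt (u + δ))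
          ((Real.sqrt (t + δ))⁻¹) t := by
        intro t ht
        rw [Set.uIcc_of_le hc.le] at ht
        have htδ : 0 < t + δ := by have := ht.1; linarith
        have h1 : HasDerivAt (fun u : ℝ => u + δ) 1 t := (hasDerivAt_id t).add_const δ
        have h2 : HasDerivAt (fun u : ℝ => Real.sqrt (u + δ)) (1 / (2 * Real.sqrt (t + δ)) * 1) t :=
          (Real.hasDerivAt_sqrt htδ.ne').comp t h1
        have h3 := h2.const_mul 2
        have hs : 0 < Real.sqrt (t + δ) := Real.sqrt_pos.mpr htδ
        rw [show (Real.sqrt (t + δ))⁻¹ = 2 * (1 / (2 * Real.sqrt (t + δ)) * 1) by field_simp]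
        exact h3
      have hi : IntervalIntegrable (fun t : ℝ => (Real.sqrt (t + δ))⁻¹) volume 0 c := by
        apply ContinuousOn.intervalIntegrable
        rw [Set.uIcc_of_le hc.le]; exact hcont
      rw [intervalIntegral.integral_eq_sub_of_hasDerivAt hd hi]
      ring_nf
    rw [this]
  · filter_upwards with t
    positivity

-- ∫_c^∞ t^{-3/2} dt = 2/√c
lemma int2 {c : ℝ} (hc : 0 < c) :
    ∫⁻ t in Set.Ioi c, ENNReal.ofReal (t ^ (-(3:ℝ)/2)) = ENNReal.ofReal (2 / Real.sqrt c) := by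
  have hint : IntegrableOn (fun t : ℝ => t ^ (-(3:ℝ)/2)) (Set.Ioi c) :=
    integrableOn_Ioi_rpow_of_lt (by norm_num) hc
  rw [← ofReal_integral_eq_lintegral_ofReal hint]
  · congr 1
    rw [integral_Ioi_rpow_of_lt (by norm_num) hc]
    have : (-(3:ℝ)/2 + 1) = -(1/2 : ℝ) := by norm_num
    rw [this]
    rw [Real.rpow_neg hc.le, ← Real.sqrt_eq_rpow]
    have hs : 0 < Real.sqrt c := Real.sqrt_pos.mpr hc
    field_simp
  · filter_upwards [ae_restrict_mem measurableSet_Ioi] with t ht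
    exact Real.rpow_nonneg (hc.le.trans (le_of_lt ht)) _

-- ∫_0^1 (t+δ)⁻¹ dt ≤ 2 |log δ|
lemma base1d {δ : ℝ} (hδ : 0 < δ) (hδ1 : δ < 1/2) :
    ∫⁻ t in Set.Icc (0:ℝ) 1, ENNReal.ofReal ((t + δ)⁻¹)
      ≤ ENNReal.ofReal (2 * |Real.log δ|) := by
  have hcont : ContinuousOn (fun t : ℝ => (t + δ)⁻¹) (Set.Icc 0 1) := by
    apply ContinuousOn.inv₀
    · exact (continuous_id.add continuous_const).continuousOn
    · intro t ht; have := ht.1; intro h; linarith [h]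
  have hint : IntegrableOn (fun t : ℝ => (t + δ)⁻¹) (Set.Icc (0:ℝ) 1) := hcont.integrableOn_Icc
  rw [← ofReal_integral_eq_lintegral_ofReal hint]
  · apply ENNReal.ofReal_le_ofReal
    rw [MeasureTheory.integral_Icc_eq_integral_Ioc, ← intervalIntegral.integral_of_le zero_le_one]
    have hd : ∀ t ∈ Set.uIcc (0:ℝ) 1, HasDerivAt (fun u : ℝ => Real.log (u + δ))
        ((t + δ)⁻¹) t := by
      intro t ht
      rw [Set.uIcc_of_le zero_le_one] at ht
      have htδ : 0 < t + δ := by have := ht.1; linarith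
      have h1 : HasDerivAt (fun u : ℝ => u + δ) 1 t := (hasDerivAt_id t).add_const δ
      have h2 := (Real.hasDerivAt_log htδ.ne').comp t h1
      rw [show (t + δ)⁻¹ = (t + δ)⁻¹ * 1 by ring]
      exact h2
    have hi : IntervalIntegrable (fun t : ℝ => (t + δ)⁻¹) volume 0 1 := by
      apply ContinuousOn.intervalIntegrable
      rw [Set.uIcc_of_le zero_le_one]; exact hcont
    rw [intervalIntegral.integral_eq_sub_of_hasDerivAt hd hi]
    have hlogδ : Real.log δ < 0 := Real.log_neg hδ (by linarith)
    have habs : |Real.log δ| = -Real.log δ := abs_of_neg hlogδ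
    have h1 : Real.log (1 + δ) ≤ Real.log 2 := by
      apply Real.log_le_log (by linarith); linarith
    have h2 : Real.log 2 ≤ -Real.log δ := by
      rw [← Real.log_inv]
      apply Real.log_le_log (by norm_num)
      rw [le_inv_comm₀ (by norm_num) hδ] <;> linarith
    simp only [zero_add]
    rw [habs]; linarith
  · filter_upwards [ae_restrict_mem measurableSet_Icc] with t ht
    have := ht.1; positivity

lemma schur {δ : ℝ} (hδ : 0 < δ) {a : ℝ} (ha : 0 ≤ a) :
    ∫⁻ t in Set.Icc (0:ℝ) 1, ENNReal.ofReal ((t + a + δ)⁻¹ * (Real.sqrt (t + δ))⁻¹)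
      ≤ ENNReal.ofReal 5 * Hh δ a := by
  set c : ℝ := a + δ with hc_def
  have hc : 0 < c := by positivity
  have hsc : 0 < Real.sqrt c := Real.sqrt_pos.mpr hc
  set g1 : ℝ → ℝ≥0∞ :=
    (Set.Icc (0:ℝ) c).indicator (fun t => ENNReal.ofReal (c⁻¹ * (Real.sqrt (t + δ))⁻¹)) with hg1
  set g2 : ℝ → ℝ≥0∞ := (Set.Ioi c).indicator (fun t => ENNReal.ofReal (t ^ (-(3:ℝ)/2))) with hg2
  have hmeas : Measurable fun t => g1 t + g2 t := by
    apply Measurable.add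
    · exact Measurable.indicator (by
        exact ENNReal.measurable_ofReal.comp ((measurable_const.mul
          ((Real.continuous_sqrt.measurable.comp (measurable_id.add_const δ)).inv))) ) measurableSet_Icc
    · exact Measurable.indicator (by
        exact ENNReal.measurable_ofReal.comp (Measurable.pow measurable_id measurable_const))
        measurableSet_Ioi
  have hpt : ∀ t ∈ Set.Icc (0:ℝ) 1,
      ENNReal.ofReal ((t + a + δ)⁻¹ * (Real.sqrt (t + δ))⁻¹) ≤ g1 t + g2 t := by
    intro t ht
    rcases le_or_gt t c with h | h
    · have ht1 : t ∈ Set.Icc (0:ℝ) c := ⟨ht.1, h⟩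
      have hb : ENNReal.ofReal ((t + a + δ)⁻¹ * (Real.sqrt (t + δ))⁻¹)
          ≤ g1 t := by
        rw [hg1, Set.indicator_of_mem ht1]
        apply ENNReal.ofReal_le_ofReal
        apply mul_le_mul_of_nonneg_right
        · exact inv_anti₀ hc (by linarith [ht.1])
        · positivity
      exact hb.trans le_self_add
    · have ht2 : t ∈ Set.Ioi c := h
      have htpos : 0 < t := hc.trans h
      have hb : ENNReal.ofReal ((t + a + δ)⁻¹ * (Real.sqrt (t + δ))⁻¹) ≤ g2 t := by
        rw [hg2, Set.indicator_of_mem ht2]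
        apply ENNReal.ofReal_le_ofReal
        have h32 : t ^ (-(3:ℝ)/2) = (t * Real.sqrt t)⁻¹ := by
          rw [show (-(3:ℝ)/2) = -((1:ℝ)+1/2) by norm_num, Real.rpow_neg htpos.le,
            Real.rpow_add htpos, Real.rpow_one, Real.sqrt_eq_rpow]
        rw [h32, ← mul_inv]
        apply inv_anti₀
        · positivity
        · apply mul_le_mul (by linarith) (Real.sqrt_le_sqrt (by linarith))
            (Real.sqrt_nonneg t) (by linarith)
      exact hb.trans le_add_self
  calc ∫⁻ t in Set.Icc (0:ℝ) 1, ENNReal.ofReal ((t + a + δ)⁻¹ * (Real.sqrt (t + δ))⁻¹)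
      ≤ ∫⁻ t in Set.Icc (0:ℝ) 1, (g1 t + g2 t) := setLIntegral_mono hmeas hpt
    _ ≤ ∫⁻ t, (g1 t + g2 t) := setLIntegral_le_lintegral _ _
    _ = (∫⁻ t, g1 t) + ∫⁻ t, g2 t := lintegral_add_left (by
        exact Measurable.indicator (ENNReal.measurable_ofReal.comp ((measurable_const.mul
          ((Real.continuous_sqrt.measurable.comp (measurable_id.add_const δ)).inv))))
          measurableSet_Icc) _
    _ ≤ ENNReal.ofReal 5 * Hh δ a := by
        have hδc : δ ≤ c := by simp [hc_def, ha]
        have hsqle : Real.sqrt δ ≤ Real.sqrt (c + δ) := Real.sqrt_le_sqrt (by linarith)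
        have hnn1 : 0 ≤ c⁻¹ * (2 * Real.sqrt (c + δ) - 2 * Real.sqrt δ) := by
          apply mul_nonneg (inv_nonneg.mpr hc.le); linarith
        have e1 : ∫⁻ t, g1 t
            = ENNReal.ofReal c⁻¹ * ENNReal.ofReal (2 * Real.sqrt (c + δ) - 2 * Real.sqrt δ) := by
          rw [hg1, lintegral_indicator measurableSet_Icc]
          simp_rw [ENNReal.ofReal_mul (inv_nonneg.mpr hc.le)]
          rw [lintegral_const_mul' _ _ ENNReal.ofReal_ne_top, int1 hδ hc]
        have e2 : ∫⁻ t, g2 t = ENNReal.ofReal (2 / Real.sqrt c) := by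
          rw [hg2, lintegral_indicator measurableSet_Ioi, int2 hc]
        rw [e1, e2, ← ENNReal.ofReal_mul (inv_nonneg.mpr hc.le),
          ← ENNReal.ofReal_add hnn1 (by positivity)]
        have hH : Hh δ a = ENNReal.ofReal ((Real.sqrt c)⁻¹) := rfl
        rw [hH, ← ENNReal.ofReal_mul (by norm_num)]
        apply ENNReal.ofReal_le_ofReal
        have hcs : Real.sqrt c * Real.sqrt c = c := Real.mul_self_sqrt hc.le
        have h2c : Real.sqrt (c + δ) ≤ Real.sqrt 2 * Real.sqrt c := by
          rw [← Real.sqrt_mul (by norm_num : (0:ℝ) ≤ 2)]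
          exact Real.sqrt_le_sqrt (by linarith)
        have hs2 : Real.sqrt 2 ≤ 3/2 := by
          rw [show (3/2:ℝ) = Real.sqrt ((3/2)^2) from (Real.sqrt_sq (by norm_num)).symm]
          exact Real.sqrt_le_sqrt (by norm_num)
        have hsδ : 0 ≤ Real.sqrt δ := Real.sqrt_nonneg δ
        have key : c⁻¹ * (2 * Real.sqrt (c + δ) - 2 * Real.sqrt δ) ≤ 3 / Real.sqrt c := by
          rw [inv_mul_le_iff₀ hc]
          have hcc : c * (3 / Real.sqrt c) = 3 * Real.sqrt c := by
            field_simp; nlinarith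
          rw [hcc]
          nlinarith
        have : (5:ℝ) * (Real.sqrt c)⁻¹ = 3 / Real.sqrt c + 2 / Real.sqrt c := by
          field_simp; ring
        rw [this]
        exact add_le_add key le_rfl

noncomputable def Ff (δ : ℝ) (k : ℕ) : (Fin (k+1) → ℝ) → ℝ≥0∞ := fun x =>
  (∏ i, Xx (x i)) * (Hh δ (x 0) *
    ((∏ i : Fin k, Kk δ (x i.castSucc) (x i.succ)) * Hh δ (x (Fin.last k))))

lemma measurable_Ff (δ : ℝ) (k : ℕ) : Measurable (Ff δ k) := by
  unfold Ff
  apply Measurable.mul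
  · exact Finset.measurable_prod _ fun i _ => measurable_Xx.comp (measurable_pi_apply i)
  apply Measurable.mul
  · exact (measurable_Hh δ).comp (measurable_pi_apply 0)
  apply Measurable.mul
  · apply Finset.measurable_prod; intro i _
    unfold Kk
    have h1 : Measurable fun x : Fin (k+1) → ℝ => x i.castSucc + x i.succ + δ :=
      by fun_prop
    exact ENNReal.measurable_ofReal.comp h1.inv
  · exact (measurable_Hh δ).comp (measurable_pi_apply _)

lemma cons_decomp {k : ℕ} (t : ℝ) (y : Fin (k+1) → ℝ) :
    (MeasurableEquiv.piFinSuccAbove (fun _ : Fin (k+2) => ℝ) 0).symm (t, y) = Fin.cons t y := by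
  simp [MeasurableEquiv.piFinSuccAbove_symm_apply, Fin.insertNthEquiv, Fin.insertNth_zero]

lemma Ff_cons (δ : ℝ) (k : ℕ) (t : ℝ) (y : Fin (k+1) → ℝ) :
    Ff δ (k+1) (Fin.cons t y) =
      (Xx t * (Kk δ t (y 0) * Hh δ t)) *
      ((∏ i, Xx (y i)) *
        ((∏ i : Fin k, Kk δ (y i.castSucc) (y i.succ)) * Hh δ (y (Fin.last k)))) := by
  unfold Ff
  have hl : (Fin.cons t y : Fin (k+2) → ℝ) (Fin.last (k+1)) = y (Fin.last k) := by
    rw [← Fin.succ_last, Fin.cons_succ]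
  simp only [Fin.prod_univ_succ, Fin.cons_zero, Fin.cons_succ, Fin.castSucc_zero,
    ← Fin.succ_castSucc, hl]
  ring

lemma inner_bound {δ : ℝ} (hδ : 0 < δ) (k : ℕ) (y : Fin (k+1) → ℝ) :
    ∫⁻ t, Ff δ (k+1) (Fin.cons t y) ≤ ENNReal.ofReal 5 * Ff δ k y := by
  by_cases hy : ∀ i, y i ∈ Set.Icc (0:ℝ) 1
  · have hy0 : 0 ≤ y 0 := (hy 0).1
    have hmg : Measurable fun t : ℝ => Xx t * (Kk δ t (y 0) * Hh δ t) := by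
      apply measurable_Xx.mul
      apply Measurable.mul _ (measurable_Hh δ)
      unfold Kk
      have h1 : Measurable fun t : ℝ => t + y 0 + δ :=
        Measurable.add_const (measurable_id.add_const (y 0)) δ
      exact ENNReal.measurable_ofReal.comp h1.inv
    simp_rw [Ff_cons]
    rw [lintegral_mul_const _ hmg]
    have hkey : ∫⁻ t, Xx t * (Kk δ t (y 0) * Hh δ t) ≤ ENNReal.ofReal 5 * Hh δ (y 0) := by
      have heq : ∀ t : ℝ, Xx t * (Kk δ t (y 0) * Hh δ t)
          = (Set.Icc (0:ℝ) 1).indicator (fun t => Kk δ t (y 0) * Hh δ t) t := fun t =>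
        Xx_mul (fun t => Kk δ t (y 0) * Hh δ t) t
      simp_rw [heq]
      rw [lintegral_indicator measurableSet_Icc]
      have heq2 : ∫⁻ t in Set.Icc (0:ℝ) 1, Kk δ t (y 0) * Hh δ t
          = ∫⁻ t in Set.Icc (0:ℝ) 1,
            ENNReal.ofReal ((t + y 0 + δ)⁻¹ * (Real.sqrt (t + δ))⁻¹) := by
        apply setLIntegral_congr_fun measurableSet_Icc
        intro t ht
        unfold Kk Hh
        beta_reduce
        rw [ENNReal.ofReal_mul (inv_nonneg.mpr (by have := ht.1; linarith))]
      rw [heq2]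
      exact schur hδ hy0
    calc (∫⁻ t, Xx t * (Kk δ t (y 0) * Hh δ t)) *
          ((∏ i, Xx (y i)) *
            ((∏ i : Fin k, Kk δ (y i.castSucc) (y i.succ)) * Hh δ (y (Fin.last k))))
        ≤ (ENNReal.ofReal 5 * Hh δ (y 0)) *
          ((∏ i, Xx (y i)) *
            ((∏ i : Fin k, Kk δ (y i.castSucc) (y i.succ)) * Hh δ (y (Fin.last k)))) :=
          mul_le_mul_left hkey _
      _ = ENNReal.ofReal 5 * Ff δ k y := by unfold Ff; ring
  · push_neg at hy
    obtain ⟨i, hi⟩ := hy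
    have hzero : (∏ j, Xx (y j)) = 0 := by
      apply Finset.prod_eq_zero (Finset.mem_univ i)
      simp [Xx, Set.indicator_of_notMem hi]
    have h1 : ∀ t, Ff δ (k+1) (Fin.cons t y) = 0 := by
      intro t; rw [Ff_cons, hzero]; ring
    simp_rw [h1]
    simp

lemma path {δ : ℝ} (hδ : 0 < δ) (hδ1 : δ < 1/2) :
    ∀ k : ℕ, ∫⁻ x : Fin (k+1) → ℝ, Ff δ k x
      ≤ ENNReal.ofReal 5 ^ k * ENNReal.ofReal (2 * |Real.log δ|) := by
  intro k
  induction k with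
  | zero =>
    rw [pow_zero, one_mul]
    have htrans : ∫⁻ x : Fin 1 → ℝ, Ff δ 0 x = ∫⁻ t : ℝ, Ff δ 0 (fun _ => t) := by
      exact ((((volume_preserving_funUnique (Fin 1) ℝ).symm _).lintegral_comp_emb
        (MeasurableEquiv.funUnique (Fin 1) ℝ).symm.measurableEmbedding (Ff δ 0))).symm
    rw [htrans]
    have heq : ∀ t : ℝ, Ff δ 0 (fun _ => t)
        = (Set.Icc (0:ℝ) 1).indicator (fun t => ENNReal.ofReal ((t + δ)⁻¹)) t := by
      intro t
      unfold Ff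
      simp only [Fin.prod_univ_one, Finset.univ_eq_empty, Finset.prod_empty, one_mul]
      by_cases ht : t ∈ Set.Icc (0:ℝ) 1
      · have htδ : 0 < t + δ := by have := ht.1; linarith
        rw [Set.indicator_of_mem ht]
        unfold Xx Hh
        rw [Set.indicator_of_mem ht]
        simp only [Pi.one_apply, one_mul]
        rw [← ENNReal.ofReal_mul (by positivity), ← mul_inv,
          Real.mul_self_sqrt htδ.le]
        simp
      · rw [Set.indicator_of_notMem ht]
        unfold Xx
        rw [Set.indicator_of_notMem ht]
        simp
    simp_rw [heq]
    rw [lintegral_indicator measurableSet_Icc]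
    exact base1d hδ hδ1
  | succ k ih =>
    set e := MeasurableEquiv.piFinSuccAbove (fun _ : Fin (k+2) => ℝ) 0 with he
    have htrans : ∫⁻ x : Fin (k+2) → ℝ, Ff δ (k+1) x
        = ∫⁻ p : ℝ × (Fin (k+1) → ℝ), Ff δ (k+1) (e.symm p) := by
      rw [((volume_preserving_piFinSuccAbove (fun _ : Fin (k+2) => ℝ) 0).symm _).lintegral_comp_emb
        e.symm.measurableEmbedding (Ff δ (k+1))]
    rw [htrans]
    have hfub : ∫⁻ p : ℝ × (Fin (k+1) → ℝ), Ff δ (k+1) (e.symm p)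
        = ∫⁻ y : Fin (k+1) → ℝ, ∫⁻ t : ℝ, Ff δ (k+1) (e.symm (t, y)) := by
      rw [show (volume : Measure (ℝ × (Fin (k+1) → ℝ))) = volume.prod volume from rfl]
      exact lintegral_prod_symm _ ((measurable_Ff δ (k+1)).comp e.symm.measurable).aemeasurable
    rw [hfub]
    have hcd : ∀ (t : ℝ) (y : Fin (k+1) → ℝ),
        Ff δ (k+1) (e.symm (t, y)) = Ff δ (k+1) (Fin.cons t y) := by
      intro t y; rw [he, cons_decomp]
    simp_rw [hcd]
    calc ∫⁻ y : Fin (k+1) → ℝ, ∫⁻ t : ℝ, Ff δ (k+1) (Fin.cons t y)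
        ≤ ∫⁻ y : Fin (k+1) → ℝ, ENNReal.ofReal 5 * Ff δ k y :=
          lintegral_mono fun y => inner_bound hδ k y
      _ = ENNReal.ofReal 5 * ∫⁻ y, Ff δ k y :=
          lintegral_const_mul _ (measurable_Ff δ k)
      _ ≤ ENNReal.ofReal 5 * (ENNReal.ofReal 5 ^ k * ENNReal.ofReal (2 * |Real.log δ|)) :=
          mul_le_mul_right ih _
      _ = ENNReal.ofReal 5 ^ (k+1) * ENNReal.ofReal (2 * |Real.log δ|) := by ring

lemma kk_le_hh {δ : ℝ} (hδ : 0 < δ) {a b : ℝ} (ha : 0 ≤ a) (hb : 0 ≤ b) :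
    Kk δ a b ≤ Hh δ a * Hh δ b := by
  unfold Kk Hh
  rw [← ENNReal.ofReal_mul (by positivity)]
  apply ENNReal.ofReal_le_ofReal
  rw [← mul_inv]
  apply inv_anti₀
  · have h1 : 0 < Real.sqrt (a + δ) := Real.sqrt_pos.mpr (by linarith)
    have h2 : 0 < Real.sqrt (b + δ) := Real.sqrt_pos.mpr (by linarith)
    positivity
  · nlinarith [Real.sq_sqrt (show (0:ℝ) ≤ a + δ by linarith),
      Real.sq_sqrt (show (0:ℝ) ≤ b + δ by linarith),
      sq_nonneg (Real.sqrt (a + δ) - Real.sqrt (b + δ)),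
      Real.sqrt_nonneg (a + δ), Real.sqrt_nonneg (b + δ)]

/-- For every integer `n ≥ 2` (here `n + 2` with `n : ℕ`) there is a constant
`C > 0` such that for all `δ ∈ (0, 1/2)`,
`∫_{[0,1]^n} ∏_{i=1}^{n} 1/(x_i + x_{i+1} + δ) dx ≤ C |log δ|`, indices cyclic
(`x_{n+1} = x_1`, realized by the cyclic addition `i + 1` in `Fin (n+2)`). -/
theorem cycle_integral_log_bound (n : ℕ) :
    ∃ C : ℝ, 0 < C ∧ ∀ δ : ℝ, δ ∈ Set.Ioo (0 : ℝ) (1/2) →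
      ∫⁻ x in Set.univ.pi (fun _ : Fin (n + 2) => Set.Icc (0 : ℝ) 1),
          ENNReal.ofReal (∏ i : Fin (n + 2), (x i + x (i + 1) + δ)⁻¹)
        ≤ ENNReal.ofReal (C * |Real.log δ|) := by
  refine ⟨2 * 5 ^ (n+1), by positivity, fun δ hδ => ?_⟩
  obtain ⟨hδ0, hδ1⟩ := hδ
  have hbox : MeasurableSet (Set.univ.pi (fun _ : Fin (n + 2) => Set.Icc (0 : ℝ) 1)) :=
    MeasurableSet.univ_pi fun _ => measurableSet_Icc
  rw [← lintegral_indicator hbox]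
  have hpt : ∀ x : Fin (n+2) → ℝ,
      (Set.univ.pi (fun _ : Fin (n + 2) => Set.Icc (0 : ℝ) 1)).indicator
        (fun x => ENNReal.ofReal (∏ i : Fin (n + 2), (x i + x (i + 1) + δ)⁻¹)) x
      ≤ Ff δ (n+1) x := by
    intro x
    by_cases hx : x ∈ Set.univ.pi (fun _ : Fin (n + 2) => Set.Icc (0 : ℝ) 1)
    · rw [Set.indicator_of_mem hx]
      have hxi : ∀ i, x i ∈ Set.Icc (0:ℝ) 1 := fun i => hx i (Set.mem_univ i)
      have h1 : ENNReal.ofReal (∏ i : Fin (n + 2), (x i + x (i + 1) + δ)⁻¹)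
          = ∏ i : Fin (n+2), Kk δ (x i) (x (i+1)) := by
        rw [ENNReal.ofReal_prod_of_nonneg]
        · rfl
        · intro i _
          have := (hxi i).1; have := (hxi (i+1)).1
          positivity
      rw [h1]
      have hsplit : ∏ i : Fin (n+2), Kk δ (x i) (x (i+1))
          = (∏ i : Fin (n+1), Kk δ (x i.castSucc) (x i.succ))
            * Kk δ (x (Fin.last (n+1))) (x 0) := by
        rw [Fin.prod_univ_castSucc]
        congr 1
        · apply Finset.prod_congr rfl
          intro i _
          rw [Fin.coeSucc_eq_succ]
        · rw [Fin.last_add_one]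
      rw [hsplit]
      have hXx : (∏ i, Xx (x i)) = 1 := by
        apply Finset.prod_eq_one
        intro i _
        simp [Xx, Set.indicator_of_mem (hxi i)]
      have hK : Kk δ (x (Fin.last (n+1))) (x 0)
          ≤ Hh δ (x (Fin.last (n+1))) * Hh δ (x 0) :=
        kk_le_hh hδ0 (hxi _).1 (hxi _).1
      calc (∏ i : Fin (n+1), Kk δ (x i.castSucc) (x i.succ))
            * Kk δ (x (Fin.last (n+1))) (x 0)
          ≤ (∏ i : Fin (n+1), Kk δ (x i.castSucc) (x i.succ))
            * (Hh δ (x (Fin.last (n+1))) * Hh δ (x 0)) := mul_le_mul_right hK _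
        _ = Ff δ (n+1) x := by unfold Ff; rw [hXx]; ring
    · rw [Set.indicator_of_notMem hx]
      exact zero_le
  calc ∫⁻ x, (Set.univ.pi (fun _ : Fin (n + 2) => Set.Icc (0 : ℝ) 1)).indicator
        (fun x => ENNReal.ofReal (∏ i : Fin (n + 2), (x i + x (i + 1) + δ)⁻¹)) x
      ≤ ∫⁻ x : Fin (n+2) → ℝ, Ff δ (n+1) x := lintegral_mono hpt
    _ ≤ ENNReal.ofReal 5 ^ (n+1) * ENNReal.ofReal (2 * |Real.log δ|) := path hδ0 hδ1 (n+1)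
    _ = ENNReal.ofReal (2 * 5 ^ (n+1) * |Real.log δ|) := by
        rw [← ENNReal.ofReal_pow (by norm_num), ← ENNReal.ofReal_mul (by positivity)]
        congr 1
        ring
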